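/- A Boolean algebra B carries a strictly positive exhaustive submeasure if and only if B has a uniformly Fréchet convergence ideal. -/

import Mathlib

open Filter Topology

variable {α : Type*}

/-- A convergence ideal on a Boolean algebra: a set of infinite sequences
(i) with no nonzero common lower bound, (ii) closed under subsequences,
(iii) closed under minorization, (iv) closed under pairwise joins, and
(v) containing every infinite antichain (sequence of pairwise disjoint nonzero elements). -/
def IsConvIdeal [BooleanAlgebra α] (I : Set (ℕ → α)) : Prop :=
  (∀ a ∈ I, ∀ b : α, (∀ n, b ≤ a n) → b = ⊥) ∧
  (∀ a ∈ I, ∀ φ : ℕ → ℕ, StrictMono φ → (fun n => a (φ n)) ∈ I) ∧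
  (∀ a ∈ I, ∀ b : ℕ → α, (∀ n, b n ≤ a n) → b ∈ I) ∧
  (∀ a ∈ I, ∀ b ∈ I, (fun n => a n ⊔ b n) ∈ I) ∧
  (∀ a : ℕ → α, (∀ n, a n ≠ ⊥) → (∀ i j, i ≠ j → a i ⊓ a j = ⊥) → a ∈ I)

/-- `ConvTo I a c` : the sequence `a` converges to `c`, i.e. `{a n ∆ c} ∈ I`. -/
def ConvTo [BooleanAlgebra α] (I : Set (ℕ → α)) (a : ℕ → α) (c : α) : Prop :=
  (fun n => symmDiff (a n) c) ∈ I

/-- `F k` picks a term of its argument sequence. -/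
def IsSelective [BooleanAlgebra α] (F : ℕ → (ℕ → α) → α) : Prop :=
  ∀ k, ∀ x : ℕ → α, ∃ n, F k x = x n

/-- Uniform Fréchet property of a convergence ideal witnessed by choice functions `F`. -/
def UnifFrechet [BooleanAlgebra α] (I : Set (ℕ → α)) (F : ℕ → (ℕ → α) → α) : Prop :=
  ∀ x : ℕ → ℕ → α, (∀ k, x k ∈ I) → (fun k => F k (x k)) ∈ I


namespace Stmt17Aux


variable {α : Type*}

/-- Join of the second components of a list. -/
def joinL [BooleanAlgebra α] (l : List (ℕ × α)) : α :=
  l.foldr (fun p b => p.2 ⊔ b) ⊥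

/-- Total dyadic weight of a list. -/
noncomputable def wtL (l : List (ℕ × α)) : ℝ :=
  (l.map fun p => (2⁻¹ : ℝ) ^ p.1).sum

section BA
variable [BooleanAlgebra α]

@[simp] lemma joinL_nil : joinL ([] : List (ℕ × α)) = ⊥ := rfl

@[simp] lemma joinL_cons (p : ℕ × α) (l : List (ℕ × α)) :
    joinL (p :: l) = p.2 ⊔ joinL l := rfl

lemma joinL_append (l₁ l₂ : List (ℕ × α)) :
    joinL (l₁ ++ l₂) = joinL l₁ ⊔ joinL l₂ := by
  induction l₁ with
  | nil => simp
  | cons p t ih => simp [ih, sup_assoc]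

end BA

@[simp] lemma wtL_nil : wtL ([] : List (ℕ × α)) = 0 := rfl

@[simp] lemma wtL_cons (p : ℕ × α) (l : List (ℕ × α)) :
    wtL (p :: l) = (2⁻¹ : ℝ) ^ p.1 + wtL l := by
  simp [wtL]

lemma wtL_append (l₁ l₂ : List (ℕ × α)) : wtL (l₁ ++ l₂) = wtL l₁ + wtL l₂ := by
  simp [wtL]

lemma wtL_nonneg (l : List (ℕ × α)) : 0 ≤ wtL l := by
  apply List.sum_nonneg
  intro x hx
  obtain ⟨p, -, rfl⟩ := List.mem_map.1 hx
  positivity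

lemma wt_mem_le {p : ℕ × α} {l : List (ℕ × α)} (hp : p ∈ l) :
    (2⁻¹ : ℝ) ^ p.1 ≤ wtL l := by
  apply List.single_le_sum
  · intro x hx
    obtain ⟨q, -, rfl⟩ := List.mem_map.1 hx
    positivity
  · exact List.mem_map_of_mem hp

lemma wtL_take_add_drop (l : List (ℕ × α)) (i : ℕ) :
    wtL (l.take i) + wtL (l.drop i) = wtL l := by
  rw [← wtL_append, List.take_append_drop]

lemma wtL_take_le (l : List (ℕ × α)) (i : ℕ) : wtL (l.take i) ≤ wtL l := by
  have h := wtL_take_add_drop l i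
  have := wtL_nonneg (l.drop i)
  linarith

lemma split_list (l : List (ℕ × α)) (hl : l ≠ []) {c : ℝ} (hc : 0 < c)
    (hw : wtL l < c) :
    ∃ A x B, l = A ++ x :: B ∧ wtL A < c / 2 ∧ wtL B < c / 2 := by
  classical
  set P : ℕ → Prop := fun i => wtL (l.take i) < c / 2 with hP
  set i₀ := Nat.findGreatest P l.length with hi₀
  by_cases h : i₀ = l.length
  · -- the whole list has weight < c/2
    have hn : l.length ≠ 0 := fun h0 => hl (List.length_eq_zero_iff.1 h0)
    have hPn : P l.length := Nat.findGreatest_of_ne_zero (hi₀.symm.trans h) hn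
    have hwl : wtL l < c / 2 := by
      have := hPn
      rwa [hP, List.take_length] at this
    refine ⟨l.dropLast, l.getLast hl, [], ?_, ?_, by simpa using half_pos hc⟩
    · exact (List.dropLast_append_getLast hl).symm
    · calc wtL l.dropLast = wtL (l.take (l.length - 1)) := by rw [List.dropLast_eq_take]
        _ ≤ wtL l := wtL_take_le l _
        _ < c / 2 := hwl
  · have hle : i₀ ≤ l.length := Nat.findGreatest_le _
    have hlt : i₀ < l.length := lt_of_le_of_ne hle h
    have hPi : P i₀ := by
      rcases Nat.eq_zero_or_pos i₀ with h0 | h0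
      · rw [hP]; simp [h0, half_pos hc]
      · exact Nat.findGreatest_of_ne_zero hi₀.symm (Nat.pos_iff_ne_zero.1 h0)
    have hnot : ¬ P (i₀ + 1) :=
      Nat.findGreatest_is_greatest (hi₀ ▸ Nat.lt_succ_self i₀) hlt
    refine ⟨l.take i₀, l.get ⟨i₀, hlt⟩, l.drop (i₀ + 1), ?_, hPi, ?_⟩
    · conv_lhs => rw [← List.take_append_drop i₀ l]
      rw [List.drop_eq_getElem_cons hlt]
      rfl
    · have h1 : wtL (l.take (i₀ + 1)) + wtL (l.drop (i₀ + 1)) = wtL l :=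
        wtL_take_add_drop l _
      have h2 : c / 2 ≤ wtL (l.take (i₀ + 1)) := le_of_not_gt hnot
      linarith

lemma chain [BooleanAlgebra α] (N : ℕ → Set α)
    (hanti : ∀ ⦃j k : ℕ⦄, k ≤ j → N j ⊆ N k)
    (hbot : ∀ k, (⊥ : α) ∈ N k)
    (htriple : ∀ k, ∀ a ∈ N (k + 1), ∀ b ∈ N (k + 1), ∀ c ∈ N (k + 1),
      a ⊔ b ⊔ c ∈ N k) :
    ∀ (n : ℕ) (l : List (ℕ × α)), l.length ≤ n → (∀ p ∈ l, p.2 ∈ N p.1) →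
      ∀ k, wtL l < (2⁻¹ : ℝ) ^ k → joinL l ∈ N k := by
  intro n
  induction n with
  | zero =>
    intro l hlen _ k _
    have : l = [] := List.length_eq_zero_iff.1 (Nat.le_zero.1 hlen)
    subst this
    simpa using hbot k
  | succ n ih =>
    intro l hlen hmem k hw
    rcases eq_or_ne l [] with rfl | hne
    · simpa using hbot k
    obtain ⟨A, x, B, hsplit, hA, hB⟩ := split_list l hne (by positivity) hw
    have hc2 : (2⁻¹ : ℝ) ^ k / 2 = (2⁻¹ : ℝ) ^ (k + 1) := by
      rw [pow_succ]; ring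
    subst hsplit
    have hlenA : A.length ≤ n := by
      simp only [List.length_append, List.length_cons] at hlen; omega
    have hlenB : B.length ≤ n := by
      simp only [List.length_append, List.length_cons] at hlen; omega
    have hAmem : ∀ p ∈ A, p.2 ∈ N p.1 := fun p hp => hmem p (by simp [hp])
    have hBmem : ∀ p ∈ B, p.2 ∈ N p.1 := fun p hp => hmem p (by simp [hp])
    have hAj : joinL A ∈ N (k + 1) := ih A hlenA hAmem (k + 1) (by rw [← hc2]; exact hA)
    have hBj : joinL B ∈ N (k + 1) := ih B hlenB hBmem (k + 1) (by rw [← hc2]; exact hB)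
    have hxmem : x ∈ A ++ x :: B := by simp
    have hxwt : (2⁻¹ : ℝ) ^ x.1 < (2⁻¹ : ℝ) ^ k :=
      lt_of_le_of_lt (wt_mem_le hxmem) hw
    have hxk : k + 1 ≤ x.1 := by
      have := (pow_lt_pow_iff_right_of_lt_one₀ (by norm_num : (0:ℝ) < 2⁻¹)
        (by norm_num : (2⁻¹:ℝ) < 1)).1 hxwt
      omega
    have hxN : x.2 ∈ N (k + 1) := hanti hxk (hmem x hxmem)
    have := htriple k _ hAj _ hxN _ hBj
    rw [joinL_append, joinL_cons, ← sup_assoc]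
    exact this


noncomputable def descSeq {α : Type*} [BooleanAlgebra α]
    (h : ∀ c : {a : α // a ≠ ⊥}, ∃ b : {a : α // a ≠ ⊥}, (b : α) < c)
    (top : {a : α // a ≠ ⊥}) : ℕ → {a : α // a ≠ ⊥}
  | 0 => top
  | n + 1 => (h (descSeq h top n)).choose

lemma descSeq_lt {α : Type*} [BooleanAlgebra α]
    (h : ∀ c : {a : α // a ≠ ⊥}, ∃ b : {a : α // a ≠ ⊥}, (b : α) < c)
    (top : {a : α // a ≠ ⊥}) (n : ℕ) :
    (descSeq h top (n + 1) : α) < descSeq h top n :=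
  (h (descSeq h top n)).choose_spec

theorem reverse_dir {α : Type*} [BooleanAlgebra α] (hnt : (⊥ : α) ≠ ⊤)
    (hatomless : ∀ a : α, a ≠ ⊥ → ∃ b, b ≠ ⊥ ∧ b < a)
    (I : Set (ℕ → α)) (F : ℕ → (ℕ → α) → α)
    (hI : IsConvIdeal I) (hF : IsSelective F) (hUF : UnifFrechet I F) :
    ∃ m : α → ℝ, m ⊥ = 0 ∧ m ⊤ = 1 ∧
      (∀ a b : α, a ≤ b → m a ≤ m b) ∧
      (∀ a b : α, m (a ⊔ b) ≤ m a + m b) ∧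
      (∀ a : α, m a = 0 → a = ⊥) ∧
      (∀ a : ℕ → α, (∀ i j, i ≠ j → a i ⊓ a j = ⊥) →
        Tendsto (fun n => m (a n)) atTop (𝓝 0)) := by
  classical
  obtain ⟨hI1, hI2, hI3, hI4, hI5⟩ := hI
  -- Step 0 : an infinite antichain, so that I is nonempty
  have hstep : ∀ c : {a : α // a ≠ ⊥}, ∃ b : {a : α // a ≠ ⊥}, (b : α) < c := by
    rintro ⟨a, ha⟩
    obtain ⟨b, hb, hlt⟩ := hatomless a ha
    exact ⟨⟨b, hb⟩, hlt⟩
  let c : ℕ → {a : α // a ≠ ⊥} := descSeq hstep ⟨⊤, fun h => hnt h.symm⟩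
  have hdec : ∀ n, (c (n + 1) : α) < c n := fun n => descSeq_lt hstep _ n
  have hSA : StrictAnti (fun n => (c n : α)) := strictAnti_nat_of_succ_lt hdec
  let d : ℕ → α := fun n => (c n : α) \ (c (n + 1) : α)
  have hd_ne : ∀ n, d n ≠ ⊥ := by
    intro n h
    exact absurd (sdiff_eq_bot_iff.1 h) (not_le_of_gt (hdec n))
  have hd_disj : ∀ i j, i ≠ j → d i ⊓ d j = ⊥ := by
    have key : ∀ i j, i < j → d i ⊓ d j = ⊥ := by
      intro i j hij
      have h1 : d j ≤ (c (i + 1) : α) := le_trans sdiff_le (hSA.antitone hij)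
      have h2 : Disjoint (d i) ((c (i + 1) : α)) := disjoint_sdiff_self_left
      exact disjoint_iff.1 (h2.mono_right h1)
    intro i j hij
    rcases lt_or_gt_of_ne hij with h | h
    · exact key i j h
    · rw [inf_comm]; exact key j i h
  have hdI : d ∈ I := hI5 d hd_ne hd_disj
  -- Basic neighbourhood-like sets
  let V : ℕ → Set α := fun j => {a | ∃ x ∈ I, a ≤ F j x}
  let P : ℕ → Set α := fun k => {a | ∀ j ≤ k, a ∈ V j}
  have hVbot : ∀ j, (⊥ : α) ∈ V j := fun j => ⟨d, hdI, bot_le⟩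
  have hPbot : ∀ k, (⊥ : α) ∈ P k := fun k j _ => hVbot j
  have hPdown : ∀ k, ∀ a b : α, a ≤ b → b ∈ P k → a ∈ P k := by
    intro k a b hab hb j hj
    obtain ⟨x, hx, hle⟩ := hb j hj
    exact ⟨x, hx, hab.trans hle⟩
  have hPanti : ∀ ⦃k k' : ℕ⦄, k ≤ k' → P k' ⊆ P k :=
    fun k k' h a ha j hj => ha j (hj.trans h)
  have hPV : ∀ k, P k ⊆ V k := fun k a ha => ha k le_rfl
  -- diagonal sequences lie in I
  have hdiag : ∀ a : ℕ → α, (∀ k, a k ∈ V k) → a ∈ I := by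
    intro a ha
    choose x hxI hxle using ha
    exact hI3 _ (hUF x hxI) a hxle
  have hdiagφ : ∀ (a : ℕ → α) (φ : ℕ → ℕ), StrictMono φ →
      (∀ k, a k ∈ V (φ k)) → a ∈ I := by
    intro a φ hφ ha
    set b : ℕ → α := fun j => if h : ∃ k, φ k = j then a h.choose else ⊥ with hb
    have hbV : ∀ j, b j ∈ V j := by
      intro j
      by_cases h : ∃ k, φ k = j
      · have hmem := ha h.choose
        rw [h.choose_spec] at hmem
        have : b j = a h.choose := by rw [hb]; simp only [dif_pos h]
        rw [this]; exact hmem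
      · have : b j = ⊥ := by rw [hb]; simp only [dif_neg h]
        rw [this]; exact hVbot j
    have hbI := hdiag b hbV
    have hba : (fun n => b (φ n)) = a := by
      funext k
      have h : ∃ k', φ k' = φ k := ⟨k, rfl⟩
      have hk : h.choose = k := hφ.injective h.choose_spec
      simp only [hb, dif_pos h, hk]
    have := hI2 b hbI φ hφ
    rwa [hba] at this
  -- members of I are absorbed
  have habsV : ∀ j, ∀ x ∈ I, ∀ᶠ n in atTop, x n ∈ V j := by
    intro j x hx
    by_contra h
    rw [Filter.not_eventually] at h
    obtain ⟨ψ, hψ, hmem⟩ := Filter.extraction_of_frequently_atTop h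
    have hyI : (fun n => x (ψ n)) ∈ I := hI2 x hx ψ hψ
    obtain ⟨n, hn⟩ := hF j (fun n => x (ψ n))
    exact hmem n ⟨_, hyI, hn.ge⟩
  have habsP : ∀ k, ∀ x ∈ I, ∀ᶠ n in atTop, x n ∈ P k := by
    intro k x hx
    have h : ∀ᶠ n in atTop, ∀ j ∈ Finset.range (k + 1), x n ∈ V j := by
      rw [Filter.eventually_all_finset]
      intro j _
      exact habsV j x hx
    filter_upwards [h] with n hn j hj
    exact hn j (Finset.mem_range.2 (Nat.lt_succ_of_le hj))
  have habsD : ∀ k, ∀ e : ℕ → α, (∀ i j, i ≠ j → e i ⊓ e j = ⊥) →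
      ∀ᶠ n in atTop, e n ∈ P k := by
    intro k e hdisj
    by_contra h
    rw [Filter.not_eventually] at h
    obtain ⟨ψ, hψ, hmem⟩ := Filter.extraction_of_frequently_atTop h
    have hne' : ∀ n, e (ψ n) ≠ ⊥ := fun n hbot => hmem n (hbot ▸ hPbot k)
    have hdisj' : ∀ i j, i ≠ j → e (ψ i) ⊓ e (ψ j) = ⊥ :=
      fun i j hij => hdisj _ _ fun hc => hij (hψ.injective hc)
    have heI : (fun n => e (ψ n)) ∈ I := hI5 _ hne' hdisj'
    obtain ⟨n, hn⟩ := (habsP k _ heI).exists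
    exact hmem n hn
  -- triple amalgamation
  have htrip : ∀ k, ∃ j, ∀ a ∈ P j, ∀ b ∈ P j, ∀ c' ∈ P j, a ⊔ b ⊔ c' ∈ P k := by
    intro k
    by_contra h
    push_neg at h
    choose a ha b hb c' hc' hnot using h
    have haI : a ∈ I := hdiagφ a id strictMono_id fun k' => hPV _ (ha k')
    have hbI : b ∈ I := hdiagφ b id strictMono_id fun k' => hPV _ (hb k')
    have hcI : c' ∈ I := hdiagφ c' id strictMono_id fun k' => hPV _ (hc' k')
    have hJ : (fun n => (fun n => a n ⊔ b n) n ⊔ c' n) ∈ I :=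
      hI4 _ (hI4 a haI b hbI) c' hcI
    obtain ⟨n, hn⟩ := (habsP k _ hJ).exists
    exact hnot n hn
  -- the final neighbourhood base
  let g : ℕ → ℕ := fun k => Nat.rec 0 (fun _ gk => max ((htrip gk).choose) (gk + 1)) k
  have hg_succ : ∀ k, g (k + 1) = max ((htrip (g k)).choose) (g k + 1) := fun k => rfl
  have hgmono : StrictMono g := by
    apply strictMono_nat_of_lt_succ
    intro k
    rw [hg_succ]
    exact lt_of_lt_of_le (Nat.lt_succ_self _) (le_max_right _ _)
  let N : ℕ → Set α := fun k => P (g k)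
  have hNanti : ∀ ⦃j k : ℕ⦄, k ≤ j → N j ⊆ N k :=
    fun j k h => hPanti (hgmono.monotone h)
  have hNbot : ∀ k, (⊥ : α) ∈ N k := fun k => hPbot (g k)
  have hNdown : ∀ k, ∀ a b : α, a ≤ b → b ∈ N k → a ∈ N k := fun k => hPdown (g k)
  have hNtriple : ∀ k, ∀ a ∈ N (k + 1), ∀ b ∈ N (k + 1), ∀ c' ∈ N (k + 1),
      a ⊔ b ⊔ c' ∈ N k := by
    intro k a ha b hb c' hc'
    have hsub : N (k + 1) ⊆ P ((htrip (g k)).choose) := by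
      have : (htrip (g k)).choose ≤ g (k + 1) := by
        rw [hg_succ]; exact le_max_left _ _
      exact hPanti this
    exact (htrip (g k)).choose_spec a (hsub ha) b (hsub hb) c' (hsub hc')
  have hNint : ∀ b : α, (∀ k, b ∈ N k) → b = ⊥ := by
    intro b hb
    have : (fun _ : ℕ => b) ∈ I := hdiagφ _ g hgmono fun k => hPV _ (hb k)
    exact hI1 _ this b fun n => le_rfl
  have hNabs : ∀ k, ∀ e : ℕ → α, (∀ i j, i ≠ j → e i ⊓ e j = ⊥) →
      ∀ᶠ n in atTop, e n ∈ N k := fun k e he => habsD (g k) e he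
  have hNtop : ∃ k, (⊤ : α) ∉ N k := by
    by_contra h
    push_neg at h
    exact hnt ((hNint ⊤ h).symm)
  -- the submeasure
  let M : α → Set ℝ := fun a =>
    {r | r = 1 ∨ ∃ l : List (ℕ × α), (∀ p ∈ l, p.2 ∈ N p.1) ∧ a ≤ joinL l ∧ r = wtL l}
  let m : α → ℝ := fun a => sInf (M a)
  have hMne : ∀ a, (M a).Nonempty := fun a => ⟨1, Or.inl rfl⟩
  have hMpos : ∀ a, ∀ r ∈ M a, (0:ℝ) ≤ r := by
    rintro a r (rfl | ⟨l, -, -, rfl⟩)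
    · norm_num
    · exact wtL_nonneg l
  have hMbdd : ∀ a, BddBelow (M a) := fun a => ⟨0, fun r hr => hMpos a r hr⟩
  have hm_nonneg : ∀ a, 0 ≤ m a := fun a => le_csInf (hMne a) (hMpos a)
  have hm_le_one : ∀ a, m a ≤ 1 := fun a => csInf_le (hMbdd a) (Or.inl rfl)
  have hm_le_pow : ∀ (a : α) (k : ℕ), a ∈ N k → m a ≤ (2⁻¹ : ℝ) ^ k := by
    intro a k ha
    apply csInf_le (hMbdd a)
    refine Or.inr ⟨[(k, a)], ?_, ?_, ?_⟩
    · intro p hp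
      rw [List.mem_singleton] at hp
      subst hp; exact ha
    · rw [joinL_cons, joinL_nil]; exact le_sup_left
    · rw [wtL_cons, wtL_nil]; ring
  have hm_mono : ∀ a b : α, a ≤ b → m a ≤ m b := by
    intro a b hab
    apply le_csInf (hMne b)
    rintro r (rfl | ⟨l, hl, hble, rfl⟩)
    · exact hm_le_one a
    · exact csInf_le (hMbdd a) (Or.inr ⟨l, hl, hab.trans hble, rfl⟩)
  have hm_subadd : ∀ a b : α, m (a ⊔ b) ≤ m a + m b := by
    intro a b
    have key : ∀ r ∈ M a, ∀ s ∈ M b, m (a ⊔ b) ≤ r + s := by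
      rintro r (rfl | ⟨l₁, h₁, hle₁, rfl⟩) s hs
      · have := hMpos b s hs
        have := hm_le_one (a ⊔ b)
        linarith
      rcases hs with rfl | ⟨l₂, h₂, hle₂, rfl⟩
      · have := wtL_nonneg l₁
        have := hm_le_one (a ⊔ b)
        linarith
      · apply csInf_le (hMbdd _)
        refine Or.inr ⟨l₁ ++ l₂, ?_, ?_, (wtL_append l₁ l₂).symm⟩
        · intro p hp
          rcases List.mem_append.1 hp with hp | hp
          · exact h₁ p hp
          · exact h₂ p hp
        · rw [joinL_append]
          exact sup_le_sup hle₁ hle₂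
    have h2 : ∀ s ∈ M b, m (a ⊔ b) - s ≤ m a :=
      fun s hs => le_csInf (hMne a) fun r hr => by linarith [key r hr s hs]
    have h3 : m (a ⊔ b) - m a ≤ m b :=
      le_csInf (hMne b) fun s hs => by linarith [h2 s hs]
    linarith
  have hm_lb : ∀ (a : α) (k : ℕ), a ∉ N k → (2⁻¹ : ℝ) ^ k ≤ m a := by
    intro a k ha
    apply le_csInf (hMne a)
    rintro r (rfl | ⟨l, hl, hle, rfl⟩)
    · exact pow_le_one₀ (by norm_num) (by norm_num)
    · by_contra hlt
      push_neg at hlt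
      exact ha (hNdown _ _ _ hle
        (chain N hNanti hNbot hNtriple l.length l le_rfl hl k hlt))
  have hpowt : Tendsto (fun k : ℕ => (2⁻¹ : ℝ) ^ k) atTop (𝓝 0) :=
    tendsto_pow_atTop_nhds_zero_of_lt_one (by norm_num) (by norm_num)
  have hmbot : m ⊥ = 0 :=
    le_antisymm (ge_of_tendsto' hpowt fun k => hm_le_pow ⊥ k (hNbot k)) (hm_nonneg ⊥)
  obtain ⟨k₀, hk₀⟩ := hNtop
  have hc : 0 < m ⊤ := lt_of_lt_of_le (by positivity) (hm_lb ⊤ k₀ hk₀)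
  have hm_exh : ∀ e : ℕ → α, (∀ i j, i ≠ j → e i ⊓ e j = ⊥) →
      Tendsto (fun n => m (e n)) atTop (𝓝 0) := by
    intro e hdisj
    rw [Metric.tendsto_atTop]
    intro ε hε
    obtain ⟨k, hk⟩ := exists_pow_lt_of_lt_one hε (show (2⁻¹ : ℝ) < 1 by norm_num)
    obtain ⟨Nn, hNn⟩ := Filter.eventually_atTop.1 (hNabs k e hdisj)
    refine ⟨Nn, fun n hn => ?_⟩
    rw [Real.dist_eq, sub_zero, abs_of_nonneg (hm_nonneg _)]
    exact lt_of_le_of_lt (hm_le_pow _ k (hNn n hn)) hk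
  -- normalize
  refine ⟨fun a => m a / m ⊤, ?_, ?_, ?_, ?_, ?_, ?_⟩
  · show m ⊥ / m ⊤ = 0
    rw [hmbot, zero_div]
  · show m ⊤ / m ⊤ = 1
    rw [div_self hc.ne']
  · intro a b hab
    show m a / m ⊤ ≤ m b / m ⊤
    exact div_le_div_of_nonneg_right (hm_mono a b hab) hc.le
  · intro a b
    show m (a ⊔ b) / m ⊤ ≤ m a / m ⊤ + m b / m ⊤
    rw [← add_div]
    exact div_le_div_of_nonneg_right (hm_subadd a b) hc.le
  · intro a ha
    have ha' : m a / m ⊤ = 0 := ha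
    rcases div_eq_zero_iff.1 ha' with h | h
    · by_contra hne
      have : ¬ ∀ k, a ∈ N k := fun hall => hne (hNint a hall)
      push_neg at this
      obtain ⟨k, hk⟩ := this
      have := hm_lb a k hk
      have : (0:ℝ) < (2⁻¹:ℝ)^k := by positivity
      linarith
    · exact absurd h hc.ne'
  · intro e hdisj
    have := (hm_exh e hdisj).div_const (m ⊤)
    simpa using this

theorem forward_dir {α : Type*} [BooleanAlgebra α] (m : α → ℝ)
    (hm0 : m ⊥ = 0) (hm1 : m ⊤ = 1)
    (hmono : ∀ a b : α, a ≤ b → m a ≤ m b)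
    (hsub : ∀ a b : α, m (a ⊔ b) ≤ m a + m b)
    (hpos : ∀ a : α, m a = 0 → a = ⊥)
    (hexh : ∀ a : ℕ → α, (∀ i j, i ≠ j → a i ⊓ a j = ⊥) →
      Tendsto (fun n => m (a n)) atTop (𝓝 0)) :
    ∃ I : Set (ℕ → α), ∃ F : ℕ → (ℕ → α) → α,
      IsConvIdeal I ∧ IsSelective F ∧ UnifFrechet I F := by
  classical
  have hmnn : ∀ a : α, 0 ≤ m a := fun a => hm0 ▸ hmono ⊥ a bot_le
  set I : Set (ℕ → α) := {a | Tendsto (fun n => m (a n)) atTop (𝓝 0)} with hIdef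
  set F : ℕ → (ℕ → α) → α := fun k x =>
    x (if h : ∃ n, m (x n) < (2⁻¹ : ℝ) ^ k then h.choose else 0) with hFdef
  refine ⟨I, F, ⟨?_, ?_, ?_, ?_, ?_⟩, ?_, ?_⟩
  · -- no nonzero lower bound
    intro a ha b hb
    have h1 : m b ≤ 0 := ge_of_tendsto ha (Filter.Eventually.of_forall
      fun n => hmono b (a n) (hb n))
    exact hpos b (le_antisymm h1 (hmnn b))
  · -- subsequences
    intro a ha φ hφ
    exact ha.comp hφ.tendsto_atTop
  · -- minorization
    intro a ha b hb
    refine tendsto_of_tendsto_of_tendsto_of_le_of_le tendsto_const_nhds ha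
      (fun n => hmnn (b n)) (fun n => hmono _ _ (hb n))
  · -- joins
    intro a ha b hb
    have hab : Tendsto (fun n => m (a n) + m (b n)) atTop (𝓝 0) := by
      simpa using ha.add hb
    exact tendsto_of_tendsto_of_tendsto_of_le_of_le tendsto_const_nhds hab
      (fun n => hmnn _) (fun n => hsub _ _)
  · -- antichains
    intro a _ hdisj
    exact hexh a hdisj
  · -- selective
    intro k x
    by_cases h : ∃ n, m (x n) < (2⁻¹ : ℝ) ^ k
    · exact ⟨h.choose, by rw [hFdef]; simp only [dif_pos h]⟩
    · exact ⟨0, by rw [hFdef]; simp only [dif_neg h]⟩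
  · -- uniformly Fréchet
    intro x hx
    have key : ∀ k, m (F k (x k)) < (2⁻¹ : ℝ) ^ k := by
      intro k
      have hev : ∀ᶠ n in atTop, m (x k n) < (2⁻¹ : ℝ) ^ k :=
        Filter.Tendsto.eventually_lt_const (by positivity) (hx k)
      have h : ∃ n, m (x k n) < (2⁻¹ : ℝ) ^ k := hev.exists
      have hFk : F k (x k) = x k h.choose := by rw [hFdef]; simp only [dif_pos h]
      rw [hFk]
      exact h.choose_spec
    have hb : Tendsto (fun k : ℕ => (2⁻¹ : ℝ) ^ k) atTop (𝓝 0) :=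
      tendsto_pow_atTop_nhds_zero_of_lt_one (by norm_num) (by norm_num)
    exact tendsto_of_tendsto_of_tendsto_of_le_of_le tendsto_const_nhds hb
      (fun k => hmnn _) (fun k => (key k).le)

end Stmt17Aux

/-- A Boolean algebra carries a strictly positive exhaustive submeasure iff
it has a uniformly Fréchet convergence ideal. -/
theorem stmt17 [BooleanAlgebra α] (hnt : (⊥ : α) ≠ ⊤) (hatomless : ∀ a : α, a ≠ ⊥ → ∃ b, b ≠ ⊥ ∧ b < a) :
    (∃ m : α → ℝ, m ⊥ = 0 ∧ m ⊤ = 1 ∧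
      (∀ a b : α, a ≤ b → m a ≤ m b) ∧
      (∀ a b : α, m (a ⊔ b) ≤ m a + m b) ∧
      (∀ a : α, m a = 0 → a = ⊥) ∧
      (∀ a : ℕ → α, (∀ i j, i ≠ j → a i ⊓ a j = ⊥) →
        Tendsto (fun n => m (a n)) atTop (𝓝 0))) ↔
    (∃ I : Set (ℕ → α), ∃ F : ℕ → (ℕ → α) → α,
      IsConvIdeal I ∧ IsSelective F ∧ UnifFrechet I F) := by
  constructor
  · rintro ⟨m, hm0, hm1, hmono, hsub, hpos, hexh⟩
    exact Stmt17Aux.forward_dir m hm0 hm1 hmono hsub hpos hexh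
  · rintro ⟨I, F, hI, hF, hUF⟩
    exact Stmt17Aux.reverse_dir hnt hatomless I F hI hF hUF
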